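/- If W_1(t), ..., W_N(t) solve the gradient flow dW_j/dt = -∇_{W_j} L^N(W_1,...,W_N), then for all j = 1, ..., N-1 and all t, d/dt (W_{j+1}^T(t) W_{j+1}(t)) = d/dt (W_j(t) W_j^T(t)); in particular the differences W_{j+1}^T(t) W_{j+1}(t) - W_j(t) W_j^T(t) are constant in time. -/

import Mathlib

open Matrix

/-- Cast a matrix along equalities of its (Fin) dimensions. -/
def mcast {a b c e : ℕ} (h1 : a = b) (h2 : c = e) (M : Matrix (Fin a) (Fin c) ℝ) :
    Matrix (Fin b) (Fin e) ℝ :=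
  M.submatrix (Fin.cast h1.symm) (Fin.cast h2.symm)

/-- The product W_{a+k} ⋯ W_{a+1} of `k` consecutive layer matrices starting at layer `a`. -/
def segProd (d : ℕ → ℕ) (W : ∀ i : ℕ, Matrix (Fin (d (i + 1))) (Fin (d i)) ℝ) (a : ℕ) :
    (k : ℕ) → Matrix (Fin (d (a + k))) (Fin (d a)) ℝ
  | 0 => (1 : Matrix (Fin (d a)) (Fin (d a)) ℝ)
  | (k + 1) => W (a + k) * segProd d W a k

/-- The full product W = W_N ⋯ W_1 of all `N` layers. -/
def netProd (N : ℕ) (d : ℕ → ℕ) (W : ∀ i : ℕ, Matrix (Fin (d (i + 1))) (Fin (d i)) ℝ) :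
    Matrix (Fin (d N)) (Fin (d 0)) ℝ :=
  mcast (congrArg d (Nat.zero_add N)) rfl (segProd d W 0 N)

/-- L^N(W_1,…,W_N) = (1/2) ‖Y - W_N⋯W_1 X‖_F². -/
noncomputable def LN (N : ℕ) (d : ℕ → ℕ) (m : ℕ)
    (X : Matrix (Fin (d 0)) (Fin m) ℝ) (Y : Matrix (Fin (d N)) (Fin m) ℝ)
    (W : ∀ i : ℕ, Matrix (Fin (d (i + 1))) (Fin (d i)) ℝ) : ℝ :=
  (1 / 2) * Matrix.trace ((Y - netProd N d W * X) * (Y - netProd N d W * X)ᵀ)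

/-- The claimed gradient ∇_{W_{j+1}} L^N = W_{j+2}ᵀ⋯W_Nᵀ (W X Xᵀ - Y Xᵀ) W_1ᵀ⋯W_jᵀ
(0-based index `j`). -/
noncomputable def gradLN (N : ℕ) (d : ℕ → ℕ) (m : ℕ)
    (X : Matrix (Fin (d 0)) (Fin m) ℝ) (Y : Matrix (Fin (d N)) (Fin m) ℝ)
    (W : ∀ i : ℕ, Matrix (Fin (d (i + 1))) (Fin (d i)) ℝ) (j : ℕ) (hj : j < N) :
    Matrix (Fin (d (j + 1))) (Fin (d j)) ℝ :=
  (mcast (congrArg d (by omega : (j + 1) + (N - (j + 1)) = N)) rfl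
      (segProd d W (j + 1) (N - (j + 1))))ᵀ *
    (netProd N d W * X * Xᵀ - Y * Xᵀ) *
    (mcast (congrArg d (Nat.zero_add j)) rfl (segProd d W 0 j))ᵀ

/- ### Auxiliary lemmas -/

lemma mcast_rfl {a c : ℕ} (h1 : a = a) (h2 : c = c) (M : Matrix (Fin a) (Fin c) ℝ) :
    mcast h1 h2 M = M := rfl

lemma mcast_mul_left {a b c f : ℕ} (h1 : a = b) (M : Matrix (Fin a) (Fin c) ℝ)
    (P : Matrix (Fin c) (Fin f) ℝ) : mcast h1 rfl (M * P) = mcast h1 rfl M * P := by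
  subst h1; rfl

lemma mcast_mul_split {a b c e f : ℕ} (h1 : a = b) (h2 : c = e) (M : Matrix (Fin a) (Fin c) ℝ)
    (P : Matrix (Fin c) (Fin f) ℝ) : mcast h1 rfl (M * P) = mcast h1 h2 M * mcast h2 rfl P := by
  subst h1; subst h2; rfl

lemma mcast_mcast {a b c g : ℕ} (h1 : a = b) (h3 : b = g) (M : Matrix (Fin a) (Fin c) ℝ) :
    mcast h3 rfl (mcast h1 rfl M) = mcast (h1.trans h3) rfl M := by
  subst h1; subst h3; rfl

lemma W_cast {d : ℕ → ℕ} (V : ∀ i : ℕ, Matrix (Fin (d (i+1))) (Fin (d i)) ℝ) {i i' : ℕ}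
    (h : i = i') (h1 : d (i+1) = d (i'+1)) (h2 : d i = d i') :
    mcast h1 h2 (V i) = V i' := by subst h; rfl

lemma segProd_k_cast {d : ℕ → ℕ} (V : ∀ i : ℕ, Matrix (Fin (d (i+1))) (Fin (d i)) ℝ)
    (a : ℕ) {k k' : ℕ} (h : k = k') (h1 : d (a+k) = d (a+k')) :
    mcast h1 rfl (segProd d V a k) = segProd d V a k' := by subst h; rfl

lemma segProd_succ_left {d : ℕ → ℕ} (V : ∀ i : ℕ, Matrix (Fin (d (i+1))) (Fin (d i)) ℝ)
    (a : ℕ) : ∀ (k : ℕ) (h1 : d ((a+1)+k) = d (a+(k+1))),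
    segProd d V a (k+1) = mcast h1 rfl (segProd d V (a+1) k) * V a
  | 0, h1 => by
    show V (a+0) * segProd d V a 0 = _
    rw [mcast_rfl]
    show V a * (1 : Matrix (Fin (d a)) (Fin (d a)) ℝ)
        = (1 : Matrix (Fin (d (a+1))) (Fin (d (a+1))) ℝ) * V a
    rw [Matrix.mul_one, Matrix.one_mul]
  | (k+1), h1 => by
    show V (a+(k+1)) * segProd d V a (k+1) = _
    rw [segProd_succ_left V a k (congrArg d (by omega))]
    show _ = mcast h1 rfl (V ((a+1)+k) * segProd d V (a+1) k) * V a
    rw [mcast_mul_split h1 (congrArg d (by omega : (a+1)+k = a+(k+1))) (V ((a+1)+k))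
        (segProd d V (a+1) k)]
    rw [W_cast V (by omega : (a+1)+k = a+k+1)]
    rw [← Matrix.mul_assoc]
    rfl

lemma low_succ {d : ℕ → ℕ} (V : ∀ i : ℕ, Matrix (Fin (d (i+1))) (Fin (d i)) ℝ) (j : ℕ)
    (h1 : d (0+(j+1)) = d (j+1)) (h2 : d (0+j) = d j) :
    mcast h1 rfl (segProd d V 0 (j+1)) = V j * mcast h2 rfl (segProd d V 0 j) := by
  show mcast h1 rfl (V (0+j) * segProd d V 0 j) = _
  rw [mcast_mul_split h1 h2 (V (0+j)) (segProd d V 0 j)]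
  rw [W_cast V (Nat.zero_add j)]

lemma A_peel (N : ℕ) {d : ℕ → ℕ} (V : ∀ i : ℕ, Matrix (Fin (d (i+1))) (Fin (d i)) ℝ) (j : ℕ)
    (hj : j + 1 + 1 ≤ N)
    (h1 : d ((j+1)+(N-(j+1))) = d N) (h2 : d ((j+1+1)+(N-(j+1+1))) = d N) :
    mcast h1 rfl (segProd d V (j+1) (N-(j+1)))
      = mcast h2 rfl (segProd d V (j+1+1) (N-(j+1+1))) * V (j+1) := by
  have hk : (N-(j+1+1)) + 1 = N - (j+1) := by omega
  rw [← segProd_k_cast V (j+1) hk (congrArg d (by omega))]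
  rw [mcast_mcast]
  rw [segProd_succ_left V (j+1) (N-(j+1+1)) (congrArg d (by omega))]
  rw [mcast_mul_left, mcast_mcast]

lemma key_identity (N : ℕ) (d : ℕ → ℕ) (m : ℕ)
    (X : Matrix (Fin (d 0)) (Fin m) ℝ) (Y : Matrix (Fin (d N)) (Fin m) ℝ)
    (V : ∀ i : ℕ, Matrix (Fin (d (i + 1))) (Fin (d i)) ℝ) (j : ℕ) (hj1 : j + 1 < N) :
    (V (j+1))ᵀ * gradLN N d m X Y V (j+1) hj1
      = gradLN N d m X Y V j (by omega) * (V j)ᵀ := by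
  simp only [gradLN]
  rw [A_peel N V j (by omega) (congrArg d (by omega)) (congrArg d (by omega))]
  rw [low_succ V j (congrArg d (Nat.zero_add (j+1))) (congrArg d (Nat.zero_add j))]
  simp only [Matrix.transpose_mul, Matrix.mul_assoc]

/-- Along the gradient flow dW_j/dt = -∇_{W_j} L^N (stated entrywise), for each j the
derivatives of W_{j+1}ᵀ W_{j+1} and W_j W_jᵀ coincide; in particular their difference is
constant in time. -/
theorem stmt2 (N : ℕ) (hN : 2 ≤ N) (d : ℕ → ℕ) (m : ℕ)
    (X : Matrix (Fin (d 0)) (Fin m) ℝ) (Y : Matrix (Fin (d N)) (Fin m) ℝ)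
    (W : ℝ → ∀ i : ℕ, Matrix (Fin (d (i + 1))) (Fin (d i)) ℝ)
    (hflow : ∀ (j : ℕ) (hj : j < N) (t : ℝ) (a : Fin (d (j + 1))) (b : Fin (d j)),
      HasDerivAt (fun s : ℝ => W s j a b) (-(gradLN N d m X Y (W t) j hj a b)) t) :
    ∀ (j : ℕ), j + 1 < N →
      (∀ t : ℝ, ∃ D : Matrix (Fin (d (j + 1))) (Fin (d (j + 1))) ℝ,
        (∀ a b, HasDerivAt (fun s : ℝ => ((W s (j + 1))ᵀ * W s (j + 1)) a b) (D a b) t) ∧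
        (∀ a b, HasDerivAt (fun s : ℝ => (W s j * (W s j)ᵀ) a b) (D a b) t)) ∧
      (∀ t : ℝ,
        (W t (j + 1))ᵀ * W t (j + 1) - W t j * (W t j)ᵀ =
          (W 0 (j + 1))ᵀ * W 0 (j + 1) - W 0 j * (W 0 j)ᵀ) := by
  intro j hj
  have hj0 : j < N := by omega
  have main : ∀ t : ℝ, ∃ D : Matrix (Fin (d (j + 1))) (Fin (d (j + 1))) ℝ,
      (∀ a b, HasDerivAt (fun s : ℝ => ((W s (j + 1))ᵀ * W s (j + 1)) a b) (D a b) t) ∧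
      (∀ a b, HasDerivAt (fun s : ℝ => (W s j * (W s j)ᵀ) a b) (D a b) t) := by
    intro t
    set G1 := gradLN N d m X Y (W t) (j+1) hj with hG1
    set G0 := gradLN N d m X Y (W t) j hj0 with hG0
    have key' : (W t (j+1))ᵀ * G1 = G0 * (W t j)ᵀ := key_identity N d m X Y (W t) j hj
    have key2 : (G1)ᵀ * W t (j+1) = W t j * G0ᵀ := by
      have h := congrArg Matrix.transpose key'
      simpa [Matrix.transpose_mul] using h
    refine ⟨-((G1)ᵀ * W t (j+1) + (W t (j+1))ᵀ * G1), ?_, ?_⟩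
    · intro a b
      have h := HasDerivAt.fun_sum (u := Finset.univ)
        (fun c _ => ((hflow (j+1) hj t c a).fun_mul (hflow (j+1) hj t c b)))
      have hfun : (fun s : ℝ => ((W s (j + 1))ᵀ * W s (j + 1)) a b)
          = fun s : ℝ => ∑ c, W s (j+1) c a * W s (j+1) c b := by
        funext s
        simp [Matrix.mul_apply, Matrix.transpose_apply]
      rw [hfun]
      refine h.congr_deriv ?_
      symm
      simp only [hG1, Matrix.mul_apply, Matrix.transpose_apply, Matrix.neg_apply,
        Matrix.add_apply, Finset.sum_add_distrib, neg_add, neg_mul, mul_neg,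
        Finset.sum_neg_distrib]
    · intro a b
      have h := HasDerivAt.fun_sum (u := Finset.univ)
        (fun c _ => ((hflow j hj0 t a c).fun_mul (hflow j hj0 t b c)))
      have hfun : (fun s : ℝ => (W s j * (W s j)ᵀ) a b)
          = fun s : ℝ => ∑ c, W s j a c * W s j b c := by
        funext s
        simp [Matrix.mul_apply, Matrix.transpose_apply]
      rw [hfun]
      have hD : -((G1)ᵀ * W t (j+1) + (W t (j+1))ᵀ * G1)
          = -(W t j * G0ᵀ + G0 * (W t j)ᵀ) := by
        rw [key', key2]
      rw [hD]
      refine h.congr_deriv ?_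
      symm
      simp only [hG0, Matrix.mul_apply, Matrix.transpose_apply, Matrix.neg_apply,
        Matrix.add_apply, Finset.sum_add_distrib, neg_add, neg_mul, mul_neg,
        Finset.sum_neg_distrib]
      exact add_comm _ _
  refine ⟨main, ?_⟩
  intro t
  have hd : ∀ (a b : Fin (d (j+1))) (x : ℝ),
      HasDerivAt (fun s : ℝ => ((W s (j + 1))ᵀ * W s (j + 1)) a b - (W s j * (W s j)ᵀ) a b)
        0 x := by
    intro a b x
    obtain ⟨D, h1, h2⟩ := main x
    have h3 := (h1 a b).sub (h2 a b)
    rw [sub_self] at h3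
    exact h3
  ext a b
  simp only [Matrix.sub_apply]
  have := is_const_of_deriv_eq_zero (f := fun s : ℝ =>
      ((W s (j + 1))ᵀ * W s (j + 1)) a b - (W s j * (W s j)ᵀ) a b)
    (fun x => (hd a b x).differentiableAt) (fun x => (hd a b x).deriv) t 0
  exact this
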